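/- Let n' ≥ 2, c' = (c'_1,…,c'_{n'}) ∈ ℂ^{n'}, and let W_{c'} ⊆ V^{⊗n'} be the image of F(c'). Consider the space V ⊗ V^{⊗n'} with the copies of V labeled 0, 1, …, n' from left to right. Then for every v ∈ ℂ the endomorphism R_{0,1}(v−c'_1) R_{0,2}(v−c'_2) ⋯ R_{0,n'}(v−c'_{n'}) of V ⊗ V^{⊗n'} maps the subspace V ⊗ W_{c'} into itself. -/
import Mathlib


/-!
We model the finite-dimensional complex vector space `V` as `ℂ^N` (i.e. `Fin N → ℂ`),
so that `V^{⊗ n}` is `(Fin n → Fin N) → ℂ` and endomorphisms of `V^{⊗ n}` are matrices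
indexed by multi-indices `Fin n → Fin N`.
-/

open scoped BigOperators

noncomputable section

/-- Endomorphisms of `V ⊗ V` for `V = ℂ^N`. -/
abbrev End2 (N : ℕ) := Matrix (Fin N × Fin N) (Fin N × Fin N) ℂ

/-- Endomorphisms of `V^{⊗ n}` for `V = ℂ^N`. -/
abbrev EndT (N n : ℕ) := Matrix (Fin n → Fin N) (Fin n → Fin N) ℂ

/-- `X_{a,b}` : the endomorphism `X` of `V ⊗ V` applied to the tensor factors `a` and `b`
(in that order) of `V^{⊗ n}`, and the identity on all other factors. -/
def op2 (N n : ℕ) (X : End2 N) (a b : Fin n) : EndT N n :=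
  fun f g => X (f a, f b) (g a, g b) *
    ∏ i : Fin n, if i ≠ a ∧ i ≠ b then (if f i = g i then (1 : ℂ) else 0) else 1

/-- The flip (permutation) operator `P : x ⊗ y ↦ y ⊗ x` on `V ⊗ V`. -/
def flipMat (N : ℕ) : End2 N := fun p q => if p.1 = q.2 ∧ p.2 = q.1 then 1 else 0

/-- `R` is a solution of the Yang--Baxter equation (with additive spectral parameters)
on `V ⊗ V ⊗ V`:  `R₁₂(u) R₁₃(u+v) R₂₃(v) = R₂₃(v) R₁₃(u+v) R₁₂(u)`. -/
def YangBaxter (N : ℕ) (R : ℂ → End2 N) : Prop :=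
  ∀ u v : ℂ,
    op2 N 3 (R u) 0 1 * op2 N 3 (R (u + v)) 0 2 * op2 N 3 (R v) 1 2 =
    op2 N 3 (R v) 1 2 * op2 N 3 (R (u + v)) 0 2 * op2 N 3 (R u) 0 1

/-- The fused operator `R_{c,c'}(u)`, acting on `V^{⊗ m}`, where the `n` factors of the first
block are embedded via `a` and the `n'` factors of the second block via `b`:
`R_{c,c'}(u) = ∏→_{i=1..n'} [ R_{n,i'}(u+c_n−c'_i) ⋯ R_{2,i'}(u+c_2−c'_i) R_{1,i'}(u+c_1−c'_i) ]`. -/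
def fusedOp (N : ℕ) (R : ℂ → End2 N) {m n n' : ℕ} (a : Fin n → Fin m) (b : Fin n' → Fin m)
    (c : Fin n → ℂ) (c' : Fin n' → ℂ) (u : ℂ) : EndT N m :=
  ((List.finRange n').map fun i =>
    (((List.finRange n).reverse).map fun k =>
      op2 N m (R (u + c k - c' i)) (a k) (b i)).prod).prod

/-- The list of pairs `(i,j)` with `i < j`, in lexicographic order. -/
def lexPairs (n : ℕ) : List (Fin n × Fin n) :=
  (List.finRange n).flatMap fun i =>
    ((List.finRange n).filter fun j => decide (i < j)).map fun j => (i, j)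

/-- The operator `F(c) = ∏→_{1 ≤ i < j ≤ n} R_{i,j}(c_i − c_j)` on `V^{⊗ n}`
(product over the pairs `i < j` in lexicographic order). -/
def Fop (N : ℕ) (R : ℂ → End2 N) {n : ℕ} (c : Fin n → ℂ) : EndT N n :=
  ((lexPairs n).map fun p => op2 N n (R (c p.1 - c p.2)) p.1 p.2).prod

/-- The endomorphism of `V^{⊗ n}` embedded into `V^{⊗ m}`, acting on the factors listed
by `e` and identically on all other factors. -/
def opBlock (N : ℕ) {m n : ℕ} (e : Fin n → Fin m) (X : EndT N n) : EndT N m :=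
  fun f g => X (f ∘ e) (g ∘ e) *
    ∏ i : Fin m, if ∀ k, e k ≠ i then (if f i = g i then (1 : ℂ) else 0) else 1

/-- The operator `P_π` on `V^{⊗ n}` permuting the tensor factors:
`P_π (x_1 ⊗ ⋯ ⊗ x_n) = x_{π(1)} ⊗ ⋯ ⊗ x_{π(n)}`. -/
def permMat (N n : ℕ) (π : Equiv.Perm (Fin n)) : EndT N n :=
  fun f g => if f = g ∘ π then 1 else 0

/-- The tensor product of a vector of `V^{⊗ n}` and a vector of `V^{⊗ n'}`,
as a vector of `V^{⊗ (n+n')}`. -/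
def tensVec (N : ℕ) {n n' : ℕ} (x : (Fin n → Fin N) → ℂ) (y : (Fin n' → Fin N) → ℂ) :
    (Fin (n + n') → Fin N) → ℂ :=
  fun f => x (fun i => f (Fin.castAdd n' i)) * y (fun j => f (Fin.natAdd n j))

end

noncomputable section Aux
variable {N M : ℕ}

lemma op2_mul_apply (X Y : End2 N) {a b c d : Fin M}
    (hca : c ≠ a) (hcb : c ≠ b) (hda : d ≠ a) (hdb : d ≠ b) (f g : Fin M → Fin N) :
    (op2 N M X a b * op2 N M Y c d) f g =
      X (f a, f b) (g a, g b) * Y (f c, f d) (g c, g d) *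
        ∏ i, if i ≠ a ∧ i ≠ b ∧ i ≠ c ∧ i ≠ d then (if f i = g i then (1:ℂ) else 0) else 1 := by
  classical
  rw [Matrix.mul_apply]
  set h₀ : Fin M → Fin N := fun i => if i = a then g a else if i = b then g b else f i with hh₀
  have h₀a : h₀ a = g a := by simp [hh₀]
  have h₀b : h₀ b = g b := by
    by_cases hba : b = a
    · simp [hh₀, hba]
    · simp [hh₀, hba]
  have h₀off : ∀ i, i ≠ a → i ≠ b → h₀ i = f i := by
    intro i hia hib; simp [hh₀, hia, hib]
  rw [Finset.sum_eq_single h₀]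
  · unfold op2
    have e1 : (∏ i, if i ≠ a ∧ i ≠ b then (if f i = h₀ i then (1:ℂ) else 0) else 1) = 1 := by
      apply Finset.prod_eq_one
      intro i _
      by_cases h : i ≠ a ∧ i ≠ b
      · rw [if_pos h, h₀off i h.1 h.2, if_pos rfl]
      · rw [if_neg h]
    have e2 : (∏ i, if i ≠ c ∧ i ≠ d then (if h₀ i = g i then (1:ℂ) else 0) else 1) =
        ∏ i, if i ≠ a ∧ i ≠ b ∧ i ≠ c ∧ i ≠ d then (if f i = g i then (1:ℂ) else 0) else 1 := by
      apply Finset.prod_congr rfl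
      intro i _
      by_cases hia : i = a
      · subst hia
        rw [if_pos (show i ≠ c ∧ i ≠ d from ⟨Ne.symm hca, Ne.symm hda⟩), h₀a, if_pos rfl]
        simp
      · by_cases hib : i = b
        · subst hib
          rw [if_pos (show i ≠ c ∧ i ≠ d from ⟨Ne.symm hcb, Ne.symm hdb⟩), h₀b, if_pos rfl]
          simp
        · rw [h₀off i hia hib]
          exact if_congr (by tauto) rfl rfl
    rw [e1, e2, h₀a, h₀b, h₀off c hca hcb,
      h₀off d hda hdb]
    ring
  · intro h _ hne
    have : ∃ i, h i ≠ h₀ i := Function.ne_iff.mp hne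
    obtain ⟨i, hi⟩ := this
    by_cases hia : i = a
    · subst hia
      have h2 : op2 N M Y c d h g = 0 := by
        unfold op2
        have : (∏ j, if j ≠ c ∧ j ≠ d then (if h j = g j then (1:ℂ) else 0) else 1) = 0 := by
          apply Finset.prod_eq_zero (Finset.mem_univ i)
          rw [if_pos ⟨Ne.symm hca, Ne.symm hda⟩, if_neg (h₀a ▸ hi)]
        rw [this, mul_zero]
      rw [h2, mul_zero]
    · by_cases hib : i = b
      · subst hib
        have h2 : op2 N M Y c d h g = 0 := by
          unfold op2
          have : (∏ j, if j ≠ c ∧ j ≠ d then (if h j = g j then (1:ℂ) else 0) else 1) = 0 := by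
            apply Finset.prod_eq_zero (Finset.mem_univ i)
            rw [if_pos ⟨Ne.symm hcb, Ne.symm hdb⟩, if_neg (h₀b ▸ hi)]
          rw [this, mul_zero]
        rw [h2, mul_zero]
      · have h1 : op2 N M X a b f h = 0 := by
          unfold op2
          have : (∏ j, if j ≠ a ∧ j ≠ b then (if f j = h j then (1:ℂ) else 0) else 1) = 0 := by
            apply Finset.prod_eq_zero (Finset.mem_univ i)
            rw [if_pos ⟨hia, hib⟩, if_neg (fun hfh => hi (by rw [← hfh, h₀off i hia hib]))]
          rw [this, mul_zero]
        rw [h1, zero_mul]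
  · intro h; exact absurd (Finset.mem_univ h₀) h

lemma op2_comm (X Y : End2 N) {a b c d : Fin M}
    (hca : c ≠ a) (hcb : c ≠ b) (hda : d ≠ a) (hdb : d ≠ b) :
    Commute (op2 N M X a b) (op2 N M Y c d) := by
  unfold Commute SemiconjBy
  ext f g
  rw [op2_mul_apply X Y hca hcb hda hdb,
    op2_mul_apply Y X (Ne.symm hca) (Ne.symm hda) (Ne.symm hcb) (Ne.symm hdb)]
  rw [mul_comm (Y (f c, f d) (g c, g d))]
  congr 1
  apply Finset.prod_congr rfl
  intro i _
  exact if_congr (by tauto) rfl rfl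
end Aux
noncomputable section Aux2
variable {N M : ℕ}

lemma opBlock_one {n : ℕ} {e : Fin n → Fin M} (he : Function.Injective e) :
    opBlock N e (1 : EndT N n) = 1 := by
  classical
  ext f g
  unfold opBlock
  by_cases hfg : f = g
  · subst hfg
    rw [Matrix.one_apply_eq, Matrix.one_apply_eq]
    simp
  · rw [Matrix.one_apply_ne hfg]
    have : ∃ i, f i ≠ g i := Function.ne_iff.mp hfg
    obtain ⟨i, hi⟩ := this
    by_cases hmem : ∃ j, e j = i
    · obtain ⟨j, hj⟩ := hmem
      rw [Matrix.one_apply_ne, zero_mul]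
      intro hcomp
      exact hi (by rw [← hj]; exact congrFun hcomp j)
    · push_neg at hmem
      have : (∏ i', if ∀ k, e k ≠ i' then (if f i' = g i' then (1:ℂ) else 0) else 1) = 0 := by
        apply Finset.prod_eq_zero (Finset.mem_univ i)
        rw [if_pos hmem, if_neg hi]
      rw [this, mul_zero]

lemma opBlock_mul {n : ℕ} {e : Fin n → Fin M} (he : Function.Injective e)
    (X Y : EndT N n) : opBlock N e (X * Y) = opBlock N e X * opBlock N e Y := by
  classical
  ext f g
  rw [Matrix.mul_apply]
  unfold opBlock
  rw [Matrix.mul_apply, Finset.sum_mul]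
  set H : (Fin n → Fin N) → (Fin M → Fin N) :=
    fun k i => if hi : ∃ j, e j = i then k hi.choose else f i with hH
  have He : ∀ k, H k ∘ e = k := by
    intro k; funext j
    have hex : ∃ j', e j' = e j := ⟨j, rfl⟩
    simp only [hH, Function.comp_apply, dif_pos hex]
    congr 1
    exact he hex.choose_spec
  have Hoff : ∀ k i, (∀ j, e j ≠ i) → H k i = f i := by
    intro k i hi
    simp only [hH]
    rw [dif_neg]
    push_neg
    exact fun j => hi j
  have Hinj : Function.Injective H := fun k k' hkk => by
    rw [← He k, ← He k', hkk]
  symm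
  rw [← Finset.sum_subset (Finset.subset_univ (Finset.univ.image H))]
  · rw [Finset.sum_image (fun k _ k' _ h => Hinj h)]
    apply Finset.sum_congr rfl
    intro k _
    have e1 : (∏ i, if ∀ j, e j ≠ i then (if f i = H k i then (1:ℂ) else 0) else 1) = 1 := by
      apply Finset.prod_eq_one
      intro i _
      by_cases h : ∀ j, e j ≠ i
      · rw [if_pos h, Hoff k i h, if_pos rfl]
      · rw [if_neg h]
    have e2 : (∏ i, if ∀ j, e j ≠ i then (if H k i = g i then (1:ℂ) else 0) else 1) =
        ∏ i, if ∀ j, e j ≠ i then (if f i = g i then (1:ℂ) else 0) else 1 := by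
      apply Finset.prod_congr rfl
      intro i _
      by_cases h : ∀ j, e j ≠ i
      · rw [if_pos h, if_pos h, Hoff k i h]
      · rw [if_neg h, if_neg h]
    have e3 : H k ∘ e = k := He k
    rw [e1, e2, e3]
    ring
  · intro h _ hnot
    by_contra hne
    apply hnot
    have hprod1 : (∏ i, if ∀ j, e j ≠ i then (if f i = h i then (1:ℂ) else 0) else 1) ≠ 0 := by
      intro h0
      apply hne
      rw [h0, mul_zero, zero_mul]
    have hoff : ∀ i, (∀ j, e j ≠ i) → h i = f i := by
      intro i hi
      by_contra hne2
      apply hprod1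
      apply Finset.prod_eq_zero (Finset.mem_univ i)
      rw [if_pos hi, if_neg (fun hh => hne2 hh.symm)]
    have : h = H (h ∘ e) := by
      funext i
      by_cases hi : ∃ j, e j = i
      · simp only [hH, dif_pos hi]
        rw [Function.comp_apply, hi.choose_spec]
      · simp only [hH, dif_neg hi]
        push_neg at hi
        exact hoff i hi
    rw [this]
    exact Finset.mem_image_of_mem H (Finset.mem_univ _)

lemma opBlock_op2 {n : ℕ} {e : Fin n → Fin M} (he : Function.Injective e)
    (X : End2 N) (i j : Fin n) :
    opBlock N e (op2 N n X i j) = op2 N M X (e i) (e j) := by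
  classical
  ext f g
  unfold opBlock op2
  simp only [Function.comp_apply]
  rw [mul_assoc]
  congr 1
  have h1 : (∏ k, if k ≠ i ∧ k ≠ j then (if f (e k) = g (e k) then (1:ℂ) else 0) else 1)
      = ∏ i' ∈ Finset.univ.image e,
          (if i' ≠ e i ∧ i' ≠ e j then (if f i' = g i' then (1:ℂ) else 0) else 1) := by
    rw [Finset.prod_image (fun a _ b _ h => he h)]
    exact Finset.prod_congr rfl fun k _ => if_congr (by simp [he.ne_iff]) rfl rfl
  have h2 : (∏ i', if ∀ k, e k ≠ i' then (if f i' = g i' then (1:ℂ) else 0) else 1)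
      = ∏ i' ∈ (Finset.univ.image e)ᶜ,
          (if i' ≠ e i ∧ i' ≠ e j then (if f i' = g i' then (1:ℂ) else 0) else 1) := by
    rw [← Finset.prod_mul_prod_compl (Finset.univ.image e)
      (fun i' => if ∀ k, e k ≠ i' then (if f i' = g i' then (1:ℂ) else 0) else 1)]
    have hA : (∏ i' ∈ Finset.univ.image e,
        (if ∀ k, e k ≠ i' then (if f i' = g i' then (1:ℂ) else 0) else 1)) = 1 := by
      apply Finset.prod_eq_one
      intro i' hi'
      obtain ⟨k, _, hk⟩ := Finset.mem_image.mp hi'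
      rw [if_neg (by push_neg; exact ⟨k, hk⟩)]
    rw [hA, one_mul]
    apply Finset.prod_congr rfl
    intro i' hi'
    rw [Finset.mem_compl, Finset.mem_image] at hi'
    push_neg at hi'
    rw [if_pos (fun k => hi' k (Finset.mem_univ k)),
      if_pos (show i' ≠ e i ∧ i' ≠ e j from
        ⟨fun h => hi' i (Finset.mem_univ i) h.symm, fun h => hi' j (Finset.mem_univ j) h.symm⟩)]
  rw [h1, h2]
  exact Finset.prod_mul_prod_compl _ _
end Aux2
noncomputable section Aux3
variable {N M : ℕ}

lemma opBlock_prod {n : ℕ} {e : Fin n → Fin M} (he : Function.Injective e)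
    (l : List (EndT N n)) : opBlock N e l.prod = (l.map (opBlock N e)).prod := by
  induction l with
  | nil => simpa using opBlock_one he
  | cons x t ih => rw [List.prod_cons, opBlock_mul he, ih, List.map_cons, List.prod_cons]

lemma ybe_at (R : ℂ → End2 N) (hR : YangBaxter N R) {a b c : Fin M}
    (hab : a ≠ b) (hac : a ≠ c) (hbc : b ≠ c) (u w : ℂ) :
    op2 N M (R u) a b * op2 N M (R (u + w)) a c * op2 N M (R w) b c =
    op2 N M (R w) b c * op2 N M (R (u + w)) a c * op2 N M (R u) a b := by
  have he : Function.Injective (![a, b, c] : Fin 3 → Fin M) := by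
    intro x y hxy
    fin_cases x <;> fin_cases y <;> simp_all
  have h := congrArg (opBlock N ![a, b, c]) (hR u w)
  rw [opBlock_mul he, opBlock_mul he, opBlock_op2 he, opBlock_op2 he, opBlock_op2 he,
    opBlock_mul he, opBlock_mul he, opBlock_op2 he, opBlock_op2 he, opBlock_op2 he] at h
  simpa using h
end Aux3
noncomputable section Aux4
variable {N M : ℕ}

lemma train (R : ℂ → End2 N) (hR : YangBaxter N R) (z w : Fin M) (hzw : z ≠ w)
    (a : ℂ) (F G : Fin M → ℂ) (hFG : ∀ j, F j = a + G j) :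
    ∀ L : List (Fin M), z ∉ L → w ∉ L → L.Nodup →
      op2 N M (R a) z w * (L.map fun j => op2 N M (R (F j)) z j).prod *
        (L.map fun j => op2 N M (R (G j)) w j).prod
      = (L.map fun j => op2 N M (R (G j)) w j).prod *
        (L.map fun j => op2 N M (R (F j)) z j).prod * op2 N M (R a) z w := by
  intro L
  induction L with
  | nil => intro _ _ _; simp
  | cons j t ih =>
    intro hz hw hnd
    simp only [List.mem_cons, not_or] at hz hw
    obtain ⟨hzj, hzt⟩ := hz
    obtain ⟨hwj, hwt⟩ := hw
    rw [List.nodup_cons] at hnd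
    obtain ⟨hjt, hndt⟩ := hnd
    simp only [List.map_cons, List.prod_cons]
    set A := op2 N M (R a) z w with hA
    set Xj := op2 N M (R (F j)) z j with hXj
    set Yj := op2 N M (R (G j)) w j with hYj
    set Pz := (t.map fun j' => op2 N M (R (F j')) z j').prod with hPz
    set Pw := (t.map fun j' => op2 N M (R (G j')) w j').prod with hPw
    have hPzYj : Pz * Yj = Yj * Pz := by
      refine (Commute.list_prod_right _ _ ?_).symm.eq
      intro y hy
      rw [List.mem_map] at hy
      obtain ⟨j', hj', rfl⟩ := hy
      exact op2_comm _ _ hzw hzj (fun h => hwt (h ▸ hj')) (fun h => hjt (h ▸ hj'))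
    have hXjPw : Xj * Pw = Pw * Xj := by
      refine (Commute.list_prod_right _ _ ?_).eq
      intro y hy
      rw [List.mem_map] at hy
      obtain ⟨j', hj', rfl⟩ := hy
      exact op2_comm _ _ (Ne.symm hzw) hwj (fun h => hzt (h ▸ hj')) (fun h => hjt (h ▸ hj'))
    have hybe : A * Xj * Yj = Yj * Xj * A := by
      have := ybe_at R hR hzw hzj hwj a (G j)
      rwa [← hFG j] at this
    have hIH : A * Pz * Pw = Pw * Pz * A := ih hzt hwt hndt
    calc A * (Xj * Pz) * (Yj * Pw)
        = A * Xj * ((Pz * Yj) * Pw) := by simp only [mul_assoc]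
      _ = A * Xj * ((Yj * Pz) * Pw) := by rw [hPzYj]
      _ = (A * Xj * Yj) * (Pz * Pw) := by simp only [mul_assoc]
      _ = (Yj * Xj * A) * (Pz * Pw) := by rw [hybe]
      _ = Yj * Xj * (A * Pz * Pw) := by simp only [mul_assoc]
      _ = Yj * Xj * (Pw * Pz * A) := by rw [hIH]
      _ = Yj * ((Xj * Pw) * (Pz * A)) := by simp only [mul_assoc]
      _ = Yj * ((Pw * Xj) * (Pz * A)) := by rw [hXjPw]
      _ = Yj * Pw * (Xj * Pz) * A := by simp only [mul_assoc]
end Aux4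
noncomputable section Aux5

/-- Recursive form of the `F`-operator over a list of tensor positions. -/
def FF (N M : ℕ) (R : ℂ → End2 N) (cc : Fin M → ℂ) : List (Fin M) → EndT N M
  | [] => 1
  | i :: t => ((t.map fun j => op2 N M (R (cc i - cc j)) i j).prod) * FF N M R cc t

variable {N M : ℕ}

lemma commute_FF (R : ℂ → End2 N) (cc : Fin M → ℂ) (X : End2 N) (z i : Fin M) :
    ∀ t : List (Fin M), z ∉ t → i ∉ t → Commute (op2 N M X z i) (FF N M R cc t) := by
  intro t
  induction t with
  | nil => intro _ _; simp [FF]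
  | cons j s ih =>
    intro hz hi
    simp only [List.mem_cons, not_or] at hz hi
    obtain ⟨hzj, hzs⟩ := hz
    obtain ⟨hij, his⟩ := hi
    show Commute _ (_ * _)
    refine Commute.mul_right ?_ (ih hzs his)
    refine Commute.list_prod_right _ _ ?_
    intro y hy
    rw [List.mem_map] at hy
    obtain ⟨j', hj', rfl⟩ := hy
    exact op2_comm _ _ (Ne.symm hzj) (Ne.symm hij)
      (fun h => hzs (h ▸ hj')) (fun h => his (h ▸ hj'))

lemma main_comm (R : ℂ → End2 N) (hR : YangBaxter N R) (cc : Fin M → ℂ) (v : ℂ) (z : Fin M) :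
    ∀ L : List (Fin M), z ∉ L → L.Nodup →
      (L.map fun j => op2 N M (R (v - cc j)) z j).prod * FF N M R cc L
      = FF N M R cc L * (L.reverse.map fun j => op2 N M (R (v - cc j)) z j).prod := by
  intro L
  induction L with
  | nil => intro _ _; simp [FF]
  | cons i t ih =>
    intro hz hnd
    simp only [List.mem_cons, not_or] at hz
    obtain ⟨hzi, hzt⟩ := hz
    rw [List.nodup_cons] at hnd
    obtain ⟨hit, hndt⟩ := hnd
    simp only [List.map_cons, List.prod_cons, FF, List.reverse_cons, List.map_append,
      List.prod_append, List.prod_cons, List.prod_nil, List.map_nil]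
    set A := op2 N M (R (v - cc i)) z i with hA'
    set Pz := (t.map fun j => op2 N M (R (v - cc j)) z j).prod with hPz'
    set Row := (t.map fun j => op2 N M (R (cc i - cc j)) i j).prod with hRow'
    set Ft := FF N M R cc t with hFt'
    set Prev := (t.reverse.map fun j => op2 N M (R (v - cc j)) z j).prod with hPrev'
    have htrain : A * Pz * Row = Row * Pz * A :=
      train R hR z i hzi (v - cc i) (fun j => v - cc j) (fun j => cc i - cc j)
        (fun j => by ring) t hzt hit hndt
    have hFtA : A * Ft = Ft * A := (commute_FF R cc _ z i t hzt hit).eq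
    have hIH : Pz * Ft = Ft * Prev := ih hzt hndt
    calc A * Pz * (Row * Ft)
        = (A * Pz * Row) * Ft := by simp only [mul_assoc]
      _ = (Row * Pz * A) * Ft := by rw [htrain]
      _ = Row * Pz * (A * Ft) := by simp only [mul_assoc]
      _ = Row * Pz * (Ft * A) := by rw [hFtA]
      _ = Row * ((Pz * Ft) * A) := by simp only [mul_assoc]
      _ = Row * ((Ft * Prev) * A) := by rw [hIH]
      _ = Row * Ft * (Prev * (A * 1)) := by simp only [mul_assoc, mul_one]
end Aux5
noncomputable section Aux6

/-- Pairs of a list in lexicographic order. -/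
def pairsOf {α : Type*} : List α → List (α × α)
  | [] => []
  | i :: t => (t.map fun j => (i, j)) ++ pairsOf t

lemma flatMap_pairs_eq_pairsOf {n : ℕ} :
    ∀ l : List (Fin n), l.Pairwise (· < ·) →
      (l.flatMap fun i => (l.filter fun j => decide (i < j)).map fun j => (i, j)) = pairsOf l := by
  intro l
  induction l with
  | nil => intro _; simp [pairsOf]
  | cons i t ih =>
    intro hl
    rw [List.pairwise_cons] at hl
    obtain ⟨hhead, htail⟩ := hl
    rw [List.flatMap_cons]
    have h1 : ((i :: t).filter fun j => decide (i < j)) = t := by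
      rw [List.filter_cons]
      rw [if_neg (by simp)]
      exact List.filter_eq_self.mpr fun a ha => decide_eq_true (hhead a ha)
    have h2 : (t.flatMap fun a => ((i :: t).filter fun j => decide (a < j)).map fun j => (a, j))
        = t.flatMap fun a => (t.filter fun j => decide (a < j)).map fun j => (a, j) := by
      rw [List.flatMap_def, List.flatMap_def]
      congr 1
      apply List.map_congr_left
      intro a ha
      congr 1
      rw [List.filter_cons, if_neg (by simpa using lt_asymm (hhead a ha))]
    rw [h1, h2, ih htail]
    rfl

lemma lexPairs_eq_pairsOf (n : ℕ) : lexPairs n = pairsOf (List.finRange n) := by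
  unfold lexPairs
  exact flatMap_pairs_eq_pairsOf _ (List.pairwise_lt_finRange n)

variable {N M : ℕ}

lemma opBlock_pairs_prod (R : ℂ → End2 N) {n : ℕ} {e : Fin n → Fin M}
    (he : Function.Injective e) (c : Fin n → ℂ) (cc : Fin M → ℂ)
    (hcc : ∀ i, cc (e i) = c i) :
    ∀ l : List (Fin n),
      opBlock N e (((pairsOf l).map fun p => op2 N n (R (c p.1 - c p.2)) p.1 p.2).prod)
        = FF N M R cc (l.map e) := by
  intro l
  induction l with
  | nil => simpa [pairsOf, FF] using opBlock_one he
  | cons i t ih =>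
    show opBlock N e ((((t.map fun j => (i, j)) ++ pairsOf t).map
        fun p => op2 N n (R (c p.1 - c p.2)) p.1 p.2).prod) = _
    rw [List.map_append, List.prod_append, opBlock_mul he, ih]
    show _ * _ = ((t.map e).map fun j => op2 N M (R (cc (e i) - cc j)) (e i) j).prod * _
    congr 1
    rw [opBlock_prod he, List.map_map, List.map_map, List.map_map]
    apply congrArg
    apply List.map_congr_left
    intro j _
    show opBlock N e (op2 N n (R (c i - c j)) i j) = op2 N M (R (cc (e i) - cc (e j))) (e i) (e j)
    rw [opBlock_op2 he, hcc, hcc]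
end Aux6

/-- On `V ⊗ V^{⊗n'}` (copies of `V` labelled `0, 1, …, n'`), the operator
`R_{0,1}(v−c'_1) R_{0,2}(v−c'_2) ⋯ R_{0,n'}(v−c'_{n'})` maps the subspace `V ⊗ W_{c'}`
(the image of `Id ⊗ F(c')`) into itself. -/
theorem left_invariant_subspace
    (N : ℕ) (R : ℂ → End2 N) (hR : YangBaxter N R)
    (n' : ℕ) (hn' : 2 ≤ n') (c' : Fin n' → ℂ) (v : ℂ) :
    ∀ x ∈ LinearMap.range
        (Matrix.mulVecLin (opBlock N (Fin.succ : Fin n' → Fin (n' + 1)) (Fop N R c'))),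
      Matrix.mulVec
        (((List.finRange n').map fun i =>
          op2 N (n' + 1) (R (v - c' i)) 0 i.succ).prod) x ∈
      LinearMap.range
        (Matrix.mulVecLin (opBlock N (Fin.succ : Fin n' → Fin (n' + 1)) (Fop N R c'))) := by
  classical
  intro x hx
  obtain ⟨y, rfl⟩ := hx
  set cc : Fin (n' + 1) → ℂ := Fin.cases v c' with hcc
  have hccsucc : ∀ i : Fin n', cc i.succ = c' i := fun i => by simp [hcc]
  set L : List (Fin (n' + 1)) := (List.finRange n').map Fin.succ with hL
  set G := opBlock N (Fin.succ : Fin n' → Fin (n' + 1)) (Fop N R c') with hGdef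
  set Z := ((List.finRange n').map fun i => op2 N (n' + 1) (R (v - c' i)) 0 i.succ).prod
    with hZdef
  set Zrev := (L.reverse.map fun j => op2 N (n' + 1) (R (v - cc j)) 0 j).prod with hZrev
  have hG : G = FF N (n' + 1) R cc L := by
    rw [hGdef]
    unfold Fop
    rw [lexPairs_eq_pairsOf]
    exact opBlock_pairs_prod R (Fin.succ_injective n') c' cc hccsucc (List.finRange n')
  have hZ : Z = (L.map fun j => op2 N (n' + 1) (R (v - cc j)) 0 j).prod := by
    rw [hZdef, hL, List.map_map]
    refine congrArg List.prod (List.map_congr_left ?_)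
    intro i _
    simp [hccsucc]
  have h0L : (0 : Fin (n' + 1)) ∉ L := by
    rw [hL]
    simp [Fin.succ_ne_zero]
  have hLnd : L.Nodup := (List.nodup_finRange n').map (Fin.succ_injective n')
  have key : Z * G = G * Zrev := by
    rw [hZ, hG, hZrev]
    exact main_comm R hR cc v 0 L h0L hLnd
  refine ⟨Zrev.mulVec y, ?_⟩
  rw [Matrix.mulVecLin_apply, Matrix.mulVecLin_apply, Matrix.mulVec_mulVec,
    Matrix.mulVec_mulVec, ← key]
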